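/- There exists a computable ρ : ℕ×ℕ → ℚ with 0 ≤ ρ(n,m) ≤ 1 for all n, m, such that for every n ∈ ℕ, writing c_n for the n-th code of a partial recursive function (via the standard denumerable encoding of Nat.Partrec.Code): limsup_{m→∞} ρ(n,m) = 1 if (c_n.eval x) is defined for every x ∈ ℕ, and limsup_{m→∞} ρ(n,m) = 0 otherwise. Consequently, the entire function f_n(z) := Σ_{m=0}^∞ ρ(n,m)^m·z^m/m! lies in CE_π and satisfies bw(f_n) = 1 if c_n is total and bw(f_n) = 0 otherwise. -/

import Mathlib

open Complex Filter MeasureTheory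
open scoped Real Topology Classical

/-- The actual bandwidth of `f`: `limsup_n |f⁽ⁿ⁾(0)|^(1/n)`. -/
noncomputable def bw (f : ℂ → ℂ) : ℝ :=
  Filter.limsup (fun n : ℕ => ‖iteratedDeriv n f 0‖ ^ ((n : ℝ)⁻¹)) Filter.atTop

/-- `r` is a description of the entire function `f` (via its Taylor coefficients at 0). -/
def IsDescription (r : ℕ × ℕ → ℚ × ℚ) (f : ℂ → ℂ) : Prop :=
  ∀ n m : ℕ,
    ‖iteratedDeriv n f 0 - (((r (n, m)).1 : ℂ) + ((r (n, m)).2 : ℂ) * Complex.I)‖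
      ≤ (2 : ℝ) ^ (-(m : ℤ))

/-- Membership in `CE_π`. -/
def MemCE (f : ℂ → ℂ) : Prop :=
  Differentiable ℂ f ∧ bw f ≤ Real.pi ∧ ∃ r : ℕ × ℕ → ℚ × ℚ, Computable r ∧ IsDescription r f

/-- Evaluation of the Gaussian-rational polynomial with coefficient list `c`. -/
noncomputable def polyEval (c : List (ℚ × ℚ)) (z : ℂ) : ℂ :=
  (((List.range c.length).zip c).map fun p => (((p.2.1 : ℂ)) + (p.2.2 : ℂ) * Complex.I) * z ^ p.1).sum

/-- The natural number `e`, viewed as a code of a partial recursive function, computes the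
total function `g` (via the standard encodings). -/
def CodeComputes {α β : Type} [Primcodable α] [Primcodable β] (e : ℕ) (g : α → β) : Prop :=
  ∀ a : α, (Denumerable.ofNat Nat.Partrec.Code e).eval (Encodable.encode a) =
    Part.some (Encodable.encode (g a))

/-- `x` is a computable real number. -/
def ComputableReal (x : ℝ) : Prop :=
  ∃ r : ℕ → ℚ, Computable r ∧ ∀ m : ℕ, |x - (r m : ℝ)| ≤ (2 : ℝ) ^ (-(m : ℤ))

/-- The function `sinc_π` on the reals. -/
noncomputable def sincR (t : ℝ) : ℝ :=
  if t = 0 then 1 else Real.sin (Real.pi * t) / (Real.pi * t)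

/-- The elementary computable signal with coefficients `c k`, `k = -L, …, L`. -/
noncomputable def elemSignal (L : ℕ) (c : ℤ → ℚ × ℚ) (t : ℝ) : ℂ :=
  ∑ k ∈ Finset.Icc (-(L : ℤ)) (L : ℤ),
    (((c k).1 : ℂ) + ((c k).2 : ℂ) * Complex.I) * (sincR (t - k) : ℂ)

/-- Membership in `CB^p_π`. -/
def MemCB (p : ℝ) (f : ℂ → ℂ) : Prop :=
  Differentiable ℂ f ∧ bw f ≤ Real.pi ∧
    MemLp (fun t : ℝ => f t) (ENNReal.ofReal p) volume ∧
    ∃ (L : ℕ → ℕ) (c : ℕ → ℤ → ℚ × ℚ), Computable L ∧ Computable₂ c ∧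
      ∀ m : ℕ,
        eLpNorm (fun t : ℝ => f t - elemSignal (L m) (c m) t) (ENNReal.ofReal p) volume
          ≤ ENNReal.ofReal ((2 : ℝ) ^ (-(m : ℤ)))

namespace Stmt17Aux

open Nat.Partrec Nat.Partrec.Code

def codeOf (n : ℕ) : Nat.Partrec.Code := Denumerable.ofNat Nat.Partrec.Code n

def haltB (n m j : ℕ) : Bool := (Nat.Partrec.Code.evaln (m + 1) (codeOf n) j).isSome

def tAux (n m : ℕ) : ℕ → Bool × ℕ :=
  Nat.rec (true, 1) fun j q =>
    (q.1 && haltB n m j, q.2 + cond (q.1 && haltB n m j) 1 0)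

def tfun (n m : ℕ) : ℕ := (tAux n m m).2

def rho : ℕ × ℕ → ℚ := fun p =>
  Nat.casesOn p.2 0 fun m => if tfun p.1 m < tfun p.1 (m + 1) then 1 else 0

lemma rho_zero (n : ℕ) : rho (n, 0) = 0 := rfl

lemma rho_succ (n m : ℕ) :
    rho (n, m + 1) = if tfun n m < tfun n (m + 1) then 1 else 0 := rfl

lemma rho_val (n m : ℕ) : rho (n, m) = 0 ∨ rho (n, m) = 1 := by
  cases m with
  | zero => exact Or.inl rfl
  | succ m =>
    rw [rho_succ]; split <;> simp

lemma tAux_succ (n m j : ℕ) :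
    tAux n m (j + 1) =
      ((tAux n m j).1 && haltB n m j,
        (tAux n m j).2 + cond ((tAux n m j).1 && haltB n m j) 1 0) := rfl

lemma tAux_fst_iff (n m j : ℕ) :
    (tAux n m j).1 = true ↔ ∀ x < j, haltB n m x = true := by
  induction j with
  | zero => simp [tAux]
  | succ j ih =>
    rw [tAux_succ]
    simp only [Bool.and_eq_true, ih]
    constructor
    · rintro ⟨h1, h2⟩ x hx
      rcases Nat.lt_succ_iff_lt_or_eq.1 hx with h | rfl
      · exact h1 x h
      · exact h2
    · intro h
      exact ⟨fun x hx => h x (hx.trans (Nat.lt_succ_self _)), h j (Nat.lt_succ_self _)⟩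

lemma tAux_snd_le (n m j : ℕ) : (tAux n m j).2 ≤ j + 1 := by
  induction j with
  | zero => simp [tAux]
  | succ j ih =>
    rw [tAux_succ]
    rcases ((tAux n m j).1 && haltB n m j) with _ | _ <;> simp <;> omega

lemma tAux_snd_mono (n m : ℕ) : Monotone fun j => (tAux n m j).2 := by
  apply monotone_nat_of_le_succ
  intro j
  rw [tAux_succ]
  simp

lemma tAux_snd_of_all (n m j : ℕ) (h : ∀ x < j, haltB n m x = true) :
    (tAux n m j).2 = j + 1 := by
  induction j with
  | zero => rfl
  | succ j ih =>
    have hfst : (tAux n m j).1 = true :=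
      (tAux_fst_iff n m j).2 fun x hx => h x (hx.trans (Nat.lt_succ_self _))
    rw [tAux_succ, hfst, h j (Nat.lt_succ_self _),
      ih fun x hx => h x (hx.trans (Nat.lt_succ_self _))]
    rfl

lemma haltB_mono {n m m' j : ℕ} (h : m ≤ m') (hh : haltB n m j = true) :
    haltB n m' j = true := by
  unfold haltB at hh ⊢
  obtain ⟨y, hy⟩ := Option.isSome_iff_exists.1 hh
  exact Option.isSome_iff_exists.2
    ⟨y, Nat.Partrec.Code.evaln_mono (Nat.succ_le_succ h) hy⟩

lemma tAux_mono_m {n m m' : ℕ} (h : m ≤ m') (j : ℕ) :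
    ((tAux n m j).1 = true → (tAux n m' j).1 = true) ∧
      (tAux n m j).2 ≤ (tAux n m' j).2 := by
  induction j with
  | zero => exact ⟨fun _ => rfl, le_rfl⟩
  | succ j ih =>
    rw [tAux_succ, tAux_succ]
    constructor
    · intro hb
      simp only [Bool.and_eq_true] at hb ⊢
      exact ⟨ih.1 hb.1, haltB_mono h hb.2⟩
    · have hcond : (cond ((tAux n m j).1 && haltB n m j) 1 0 : ℕ) ≤
          cond ((tAux n m' j).1 && haltB n m' j) 1 0 := by
        rcases hb : ((tAux n m j).1 && haltB n m j) with _ | _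
        · simp
        · simp only [Bool.and_eq_true] at hb
          have : ((tAux n m' j).1 && haltB n m' j) = true :=
            by rw [Bool.and_eq_true]; exact ⟨ih.1 hb.1, haltB_mono h hb.2⟩
          rw [this]
      exact Nat.add_le_add ih.2 hcond

lemma tfun_mono (n : ℕ) : Monotone (tfun n) := fun m m' h =>
  le_trans ((tAux_mono_m h m).2) (tAux_snd_mono n m' h)

lemma tAux_snd_stall {n m x₀ : ℕ} (h : haltB n m x₀ = false) :
    ∀ j, x₀ ≤ j → (tAux n m j).2 ≤ x₀ + 1 := by
  intro j hj
  induction j, hj using Nat.le_induction with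
  | base => exact tAux_snd_le n m x₀
  | succ j hj ih =>
    rw [tAux_succ]
    have hb : ((tAux n m j).1 && haltB n m j) = false := by
      rcases Nat.lt_or_ge x₀ j with hlt | hge
      · rcases hfst : (tAux n m j).1 with _ | _
        · simp
        · exact absurd (((tAux_fst_iff n m j).1 hfst) x₀ hlt) (by simp [h])
      · have : j = x₀ := le_antisymm hge hj
        subst this
        simp [h]
    rw [hb]
    simpa using ih

lemma haltB_false_of_not_dom {n x₀ : ℕ} (h : ¬((codeOf n).eval x₀).Dom) (m : ℕ) :
    haltB n m x₀ = false := by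
  by_contra hb
  rw [Bool.not_eq_false] at hb
  obtain ⟨y, hy⟩ := Option.isSome_iff_exists.1 hb
  exact h (Part.dom_iff_mem.2 ⟨y, Nat.Partrec.Code.evaln_sound hy⟩)

lemma tfun_bounded {n x₀ : ℕ} (h : ¬((codeOf n).eval x₀).Dom) (m : ℕ) :
    tfun n m ≤ x₀ + 1 := by
  rcases Nat.lt_or_ge m x₀ with hlt | hge
  · exact le_trans (tAux_snd_le n m m) (by omega)
  · exact tAux_snd_stall (haltB_false_of_not_dom h m) m hge

lemma tfun_unbounded {n : ℕ} (h : ∀ x, ((codeOf n).eval x).Dom) (N : ℕ) :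
    ∃ m, N + 1 ≤ tfun n m := by
  have hex : ∀ x : ℕ, ∃ k, (Nat.Partrec.Code.evaln k (codeOf n) x).isSome = true := by
    intro x
    obtain ⟨y, hy⟩ := Part.dom_iff_mem.1 (h x)
    obtain ⟨k, hk⟩ := Nat.Partrec.Code.evaln_complete.1 hy
    exact ⟨k, Option.isSome_iff_exists.2 ⟨y, hk⟩⟩
  choose k hk using hex
  set K := (Finset.range N).sup k with hK
  set m := max N K with hm
  have hhalt : ∀ x < N, haltB n m x = true := by
    intro x hx
    obtain ⟨y, hy⟩ := Option.isSome_iff_exists.1 (hk x)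
    have hle : k x ≤ m + 1 := by
      have : k x ≤ K := Finset.le_sup (Finset.mem_range.2 hx)
      omega
    exact Option.isSome_iff_exists.2 ⟨y, Nat.Partrec.Code.evaln_mono hle hy⟩
  refine ⟨m, ?_⟩
  have h1 : (tAux n m N).2 = N + 1 := tAux_snd_of_all n m N hhalt
  have h2 : (tAux n m N).2 ≤ (tAux n m m).2 := tAux_snd_mono n m (le_max_left _ _)
  unfold tfun
  omega

lemma freq_one {n : ℕ} (h : ∀ x, ((codeOf n).eval x).Dom) (M : ℕ) :
    ∃ m, M ≤ m ∧ rho (n, m) = 1 := by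
  by_contra hc
  push_neg at hc
  have hstep : ∀ m, M ≤ m → tfun n (m + 1) = tfun n m := by
    intro m hm
    have h1 := hc (m + 1) (by omega)
    rw [rho_succ] at h1
    have : ¬(tfun n m < tfun n (m + 1)) := by
      intro hlt; rw [if_pos hlt] at h1; exact h1 rfl
    exact le_antisymm (not_lt.1 this) (tfun_mono n (Nat.le_succ m))
  have hconst : ∀ m, M ≤ m → tfun n m = tfun n M := by
    intro m hm
    induction m, hm using Nat.le_induction with
    | base => rfl
    | succ m hm ih => rw [hstep m hm, ih]
  obtain ⟨m', hm'⟩ := tfun_unbounded h (tfun n M)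
  rcases Nat.lt_or_ge m' M with hlt | hge
  · have := tfun_mono n hlt.le
    omega
  · have := hconst m' hge
    omega

lemma eventually_zero {n : ℕ} (h : ¬∀ x, ((codeOf n).eval x).Dom) :
    ∃ M, ∀ m, M ≤ m → rho (n, m) = 0 := by
  push_neg at h
  obtain ⟨x₀, hx₀⟩ := h
  have hbdd : BddAbove (Set.range (tfun n)) :=
    ⟨x₀ + 1, by rintro v ⟨m, rfl⟩; exact tfun_bounded hx₀ m⟩
  have hmem : sSup (Set.range (tfun n)) ∈ Set.range (tfun n) :=
    Nat.sSup_mem ⟨tfun n 0, ⟨0, rfl⟩⟩ hbdd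
  obtain ⟨M, hM⟩ := hmem
  have hconst : ∀ m, M ≤ m → tfun n m = tfun n M := by
    intro m hm
    refine le_antisymm ?_ (tfun_mono n hm)
    rw [hM]
    exact le_csSup hbdd ⟨m, rfl⟩
  refine ⟨M + 1, fun m hm => ?_⟩
  obtain ⟨m', rfl⟩ : ∃ m', m = m' + 1 := ⟨m - 1, by omega⟩
  rw [rho_succ, if_neg]
  rw [hconst m' (by omega), hconst (m' + 1) (by omega)]
  exact lt_irrefl _
lemma haltB_prim : Primrec fun q : (ℕ × ℕ) × ℕ => haltB q.1.1 q.1.2 q.2 := by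
  have h1 : Primrec fun q : (ℕ × ℕ) × ℕ => ((q.1.2 + 1, codeOf q.1.1), q.2) :=
    ((Primrec.succ.comp (Primrec.snd.comp Primrec.fst)).pair
      ((Primrec.ofNat Nat.Partrec.Code).comp (Primrec.fst.comp Primrec.fst))).pair Primrec.snd
  exact Primrec.option_isSome.comp (Nat.Partrec.Code.primrec_evaln.comp h1)

lemma tAux_prim : Primrec fun q : (ℕ × ℕ) × ℕ => tAux q.1.1 q.1.2 q.2 := by
  have hb : Primrec fun w : ((ℕ × ℕ) × ℕ) × ℕ × (Bool × ℕ) =>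
      (w.2.2.1 && haltB w.1.1.1 w.1.1.2 w.2.1) := by
    have := (Primrec.dom_bool₂ (· && ·)).comp
      (Primrec.fst.comp (Primrec.snd.comp Primrec.snd) : Primrec fun w : ((ℕ × ℕ) × ℕ) × ℕ × (Bool × ℕ) => w.2.2.1)
      (haltB_prim.comp (((Primrec.fst.comp Primrec.fst).pair (Primrec.fst.comp Primrec.snd))))
    exact this
  have hh : Primrec₂ fun (a : (ℕ × ℕ) × ℕ) (x : ℕ × (Bool × ℕ)) =>
      ((x.2.1 && haltB a.1.1 a.1.2 x.1, x.2.2 + cond (x.2.1 && haltB a.1.1 a.1.2 x.1) 1 0) : Bool × ℕ) := by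
    exact hb.pair (Primrec.nat_add.comp
      (Primrec.snd.comp (Primrec.snd.comp Primrec.snd))
      (Primrec.cond hb (Primrec.const 1) (Primrec.const 0)))
  exact (Primrec.nat_rec' Primrec.snd (Primrec.const ((true, 1) : Bool × ℕ)) hh).of_eq
    fun q => by rfl

lemma tfun_prim : Primrec fun p : ℕ × ℕ => tfun p.1 p.2 :=
  (Primrec.snd.comp (tAux_prim.comp (Primrec.id.pair Primrec.snd))).of_eq fun p => rfl

lemma rho_prim : Primrec rho := by
  have hlt : PrimrecPred fun q : (ℕ × ℕ) × ℕ => tfun q.1.1 q.2 < tfun q.1.1 (q.2 + 1) :=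
    Primrec.nat_lt.comp
      (tfun_prim.comp ((Primrec.fst.comp Primrec.fst).pair Primrec.snd))
      (tfun_prim.comp ((Primrec.fst.comp Primrec.fst).pair (Primrec.succ.comp Primrec.snd)))
  have hh : Primrec₂ fun (p : ℕ × ℕ) (m : ℕ) =>
      (if tfun p.1 m < tfun p.1 (m + 1) then (1 : ℚ) else 0) :=
    Primrec.ite hlt (Primrec.const 1) (Primrec.const 0)
  exact (Primrec.nat_casesOn Primrec.snd (Primrec.const (0 : ℚ)) hh).of_eq fun p => rfl

variable (q : ℕ → ℚ)

noncomputable def Fser (q : ℕ → ℚ) : FormalMultilinearSeries ℂ ℂ ℂ :=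
  FormalMultilinearSeries.ofScalars ℂ (fun m => ((q m : ℂ)) ^ m / (m.factorial : ℂ))

lemma norm_coeff_le (hq : ∀ m, q m = 0 ∨ q m = 1) (m : ℕ) :
    ‖((q m : ℂ)) ^ m / (m.factorial : ℂ)‖ ≤ ((m.factorial : ℝ))⁻¹ := by
  rw [norm_div, norm_pow]
  have h1 : ‖(q m : ℂ)‖ ≤ 1 := by
    rcases hq m with h | h <;> simp [h]
  have h2 : ‖(q m : ℂ)‖ ^ m ≤ 1 := pow_le_one₀ (norm_nonneg _) h1
  have h3 : ‖((m.factorial : ℂ))‖ = (m.factorial : ℝ) := by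
    simp
  rw [h3, div_le_iff₀ (by positivity), inv_mul_cancel₀ (by positivity : (m.factorial:ℝ) ≠ 0)]
  exact h2

lemma Fser_radius (hq : ∀ m, q m = 0 ∨ q m = 1) : (Fser q).radius = ⊤ := by
  apply FormalMultilinearSeries.radius_eq_top_of_summable_norm
  intro r
  have hsum := Real.summable_pow_div_factorial (r : ℝ)
  refine Summable.of_nonneg_of_le (fun m => by positivity) (fun m => ?_) hsum
  have hn : ‖Fser q m‖ = ‖((q m : ℂ)) ^ m / (m.factorial : ℂ)‖ := by
    rw [Fser]; exact FormalMultilinearSeries.ofScalars_norm _ _ _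
  rw [hn]
  calc ‖((q m : ℂ)) ^ m / (m.factorial : ℂ)‖ * (r : ℝ) ^ m
      ≤ ((m.factorial : ℝ))⁻¹ * (r : ℝ) ^ m := by
        apply mul_le_mul_of_nonneg_right (norm_coeff_le q hq m) (by positivity)
    _ = (r : ℝ) ^ m / (m.factorial : ℝ) := by ring

lemma Fser_hasSeries (hq : ∀ m, q m = 0 ∨ q m = 1) :
    HasFPowerSeriesOnBall
      (fun z : ℂ => ∑' m : ℕ, ((q m : ℂ)) ^ m * z ^ m / (m.factorial : ℂ))
      (Fser q) 0 ⊤ := by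
  have h0 : 0 < (Fser q).radius := by rw [Fser_radius q hq]; exact ENNReal.zero_lt_top
  have hb := (Fser q).hasFPowerSeriesOnBall h0
  rw [Fser_radius q hq] at hb
  convert hb using 1
  funext z
  rw [FormalMultilinearSeries.sum]
  refine tsum_congr fun m => ?_
  rw [Fser, FormalMultilinearSeries.ofScalars_apply_eq, smul_eq_mul]
  ring

lemma F_differentiable (hq : ∀ m, q m = 0 ∨ q m = 1) :
    Differentiable ℂ (fun z : ℂ => ∑' m : ℕ, ((q m : ℂ)) ^ m * z ^ m / (m.factorial : ℂ)) := by
  intro z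
  exact ((Fser_hasSeries q hq).analyticAt_of_mem (by simp)).differentiableAt

lemma F_iteratedDeriv (hq : ∀ m, q m = 0 ∨ q m = 1) (m : ℕ) :
    iteratedDeriv m (fun z : ℂ => ∑' k : ℕ, ((q k : ℂ)) ^ k * z ^ k / (k.factorial : ℂ)) 0
      = ((q m : ℂ)) ^ m := by
  have h := (Fser_hasSeries q hq).factorial_smul (1 : ℂ) m
  rw [iteratedDeriv_eq_iteratedFDeriv, ← h, Fser,
    FormalMultilinearSeries.ofScalars_apply_eq, one_pow, smul_eq_mul, mul_one, nsmul_eq_mul]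
  rw [mul_div_cancel₀]
  exact_mod_cast (Nat.factorial_ne_zero m)

lemma rho_nonneg_le (n m : ℕ) : 0 ≤ rho (n, m) ∧ rho (n, m) ≤ 1 := by
  rcases rho_val n m with h | h <;> rw [h] <;> norm_num

lemma limsup_eq (n : ℕ) :
    Filter.limsup (fun m : ℕ => (rho (n, m) : ℝ)) Filter.atTop =
      if ∀ x : ℕ, ((codeOf n).eval x).Dom then 1 else 0 := by
  by_cases h : ∀ x, ((codeOf n).eval x).Dom
  · rw [if_pos h]
    have hub : ∀ m, (rho (n, m) : ℝ) ≤ 1 := fun m => by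
      rcases rho_val n m with h' | h' <;> rw [h'] <;> norm_num
    have hlb : ∀ m, (0 : ℝ) ≤ (rho (n, m) : ℝ) := fun m => by
      rcases rho_val n m with h' | h' <;> rw [h'] <;> norm_num
    have hbdd : Filter.IsBoundedUnder (· ≤ ·) Filter.atTop
        (fun m : ℕ => (rho (n, m) : ℝ)) := Filter.isBoundedUnder_of ⟨1, hub⟩
    have hbdd' : Filter.IsBoundedUnder (· ≥ ·) Filter.atTop
        (fun m : ℕ => (rho (n, m) : ℝ)) := Filter.isBoundedUnder_of ⟨0, hlb⟩
    refine le_antisymm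
      (Filter.limsup_le_of_le hbdd'.isCoboundedUnder_le (Filter.Eventually.of_forall hub)) ?_
    refine Filter.le_limsup_of_frequently_le ?_ hbdd
    rw [Filter.frequently_atTop]
    intro M
    obtain ⟨m, hm, he⟩ := freq_one h M
    exact ⟨m, hm, by rw [he]; norm_num⟩
  · rw [if_neg h]
    obtain ⟨M, hM⟩ := eventually_zero h
    have hev : ∀ᶠ m in Filter.atTop, (rho (n, m) : ℝ) = (fun _ : ℕ => (0 : ℝ)) m :=
      Filter.eventually_atTop.2 ⟨M, fun m hm => by rw [hM m hm]; norm_num⟩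
    rw [Filter.limsup_congr hev]
    exact Filter.limsup_const 0

lemma bw_eq (n : ℕ) :
    bw (fun z : ℂ => ∑' m : ℕ, ((rho (n, m) : ℂ)) ^ m * z ^ m / (m.factorial : ℂ)) =
      Filter.limsup (fun m : ℕ => (rho (n, m) : ℝ)) Filter.atTop := by
  rw [bw]
  apply Filter.limsup_congr
  filter_upwards [Filter.eventually_ge_atTop 1] with m hm
  rw [F_iteratedDeriv (fun k => rho (n, k)) (fun k => rho_val n k) m]
  rcases rho_val n m with h | h
  · rw [h]
    have h1 : ((0 : ℚ) : ℂ) ^ m = 0 := by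
      rw [Rat.cast_zero, zero_pow (by omega)]
    rw [h1, norm_zero, Real.zero_rpow (inv_ne_zero (Nat.cast_ne_zero.2 (by omega)))]
    norm_num
  · rw [h]
    simp [Real.one_rpow]

lemma memCE (n : ℕ) :
    MemCE (fun z : ℂ => ∑' m : ℕ, ((rho (n, m) : ℂ)) ^ m * z ^ m / (m.factorial : ℂ)) := by
  refine ⟨F_differentiable (fun k => rho (n, k)) (fun k => rho_val n k), ?_, ?_⟩
  · rw [bw_eq, limsup_eq]
    split
    · linarith [Real.pi_gt_three]
    · exact Real.pi_pos.le
  · refine ⟨fun km => (if km.1 = 0 then (1 : ℚ) else rho (n, km.1), (0 : ℚ)), ?_, ?_⟩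
    · have hp : Primrec fun km : ℕ × ℕ =>
          ((if km.1 = 0 then (1 : ℚ) else rho (n, km.1), (0 : ℚ)) : ℚ × ℚ) :=
        (Primrec.ite (Primrec.eq.comp Primrec.fst (Primrec.const 0)) (Primrec.const 1)
          (rho_prim.comp ((Primrec.const n).pair Primrec.fst))).pair (Primrec.const 0)
      exact hp.to_comp
    · intro k m
      rw [F_iteratedDeriv (fun j => rho (n, j)) (fun j => rho_val n j) k]
      have hcoeff : ((rho (n, k) : ℂ)) ^ k
          = ((((if k = 0 then (1 : ℚ) else rho (n, k)) : ℚ) : ℂ)) + ((0 : ℚ) : ℂ) * Complex.I := by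
        cases k with
        | zero => simp
        | succ k =>
          rw [if_neg (Nat.succ_ne_zero k)]
          rcases rho_val n (k + 1) with h | h <;> rw [h] <;> push_cast <;> simp
      rw [hcoeff]
      simp only [sub_self, norm_zero]
      positivity

end Stmt17Aux

theorem stmt17 :
    ∃ ρ : ℕ × ℕ → ℚ, Computable ρ ∧ (∀ n m : ℕ, 0 ≤ ρ (n, m) ∧ ρ (n, m) ≤ 1) ∧
      ∀ n : ℕ,
        (Filter.limsup (fun m : ℕ => (ρ (n, m) : ℝ)) Filter.atTop =
          if ∀ x : ℕ, ((Denumerable.ofNat Nat.Partrec.Code n).eval x).Dom then 1 else 0) ∧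
        MemCE (fun z : ℂ => ∑' m : ℕ, ((ρ (n, m) : ℂ)) ^ m * z ^ m / (m.factorial : ℂ)) ∧
        bw (fun z : ℂ => ∑' m : ℕ, ((ρ (n, m) : ℂ)) ^ m * z ^ m / (m.factorial : ℂ)) =
          (if ∀ x : ℕ, ((Denumerable.ofNat Nat.Partrec.Code n).eval x).Dom then 1 else 0) := by
  refine ⟨Stmt17Aux.rho, Stmt17Aux.rho_prim.to_comp, Stmt17Aux.rho_nonneg_le, fun n => ?_⟩
  refine ⟨Stmt17Aux.limsup_eq n, Stmt17Aux.memCE n, ?_⟩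
  rw [Stmt17Aux.bw_eq n]
  exact Stmt17Aux.limsup_eq n
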